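/- arXiv:2308.06336 — 8 statements merged into one kernel-verified Lean document; each statement's English description precedes it below -/
import Mathlib

section
/- For simplicial complexes Σ' and Σ, the assignment sending a simplicial complex map g: Σ' → ĤNΣ to the relation π ⊆ Σ'_0 × Σ_0 with (x', x) ∈ π iff x ∈ g(x') is a bijection between the set of simplicial complex maps Σ' → ĤNΣ and the set of simplicial relations from Σ' to Σ. -/
universe u v w t

namespace Ctx

/-- An abstract simplicial complex on the vertex type `V`: a collection of
nonempty finite subsets of `V` (the simplices/faces), closed under passing to
nonempty subsets, and containing every singleton (so that `V` is exactly the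
vertex set). -/
structure SComplex (V : Type u) where
  faces : Set (Set V)
  finite_mem : ∀ σ ∈ faces, Set.Finite σ
  nonempty_mem : ∀ σ ∈ faces, Set.Nonempty σ
  down_closed : ∀ ⦃σ⦄, σ ∈ faces → ∀ ⦃τ⦄, τ ⊆ σ → τ.Nonempty → τ ∈ faces
  singleton_mem : ∀ x : V, {x} ∈ faces

namespace SComplex

variable {V : Type u} {W : Type v} {V' : Type w} {V'' : Type t}

/-- A map of simplicial complexes: a function on vertices carrying every
simplex (elementwise image) to a simplex. -/
@[ext]
structure Map (Γ : SComplex V) (K : SComplex W) where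
  toFun : V → W
  map_faces : ∀ ⦃σ⦄, σ ∈ Γ.faces → toFun '' σ ∈ K.faces

variable {Γ : SComplex V} {K : SComplex W} {K' : SComplex V'}

/-- The identity simplicial complex map. -/
protected def Map.id (K : SComplex V) : Map K K :=
  ⟨fun x => x, fun σ h => by simpa using h⟩

/-- Composition of simplicial complex maps. -/
def Map.comp {L : SComplex V'} (g : Map K L) (f : Map Γ K) : Map Γ L :=
  ⟨g.toFun ∘ f.toFun, fun σ h => by
    rw [Set.image_comp]; exact g.map_faces (f.map_faces h)⟩

/-- The star of a simplex: all simplices containing it. -/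
def star (K : SComplex V) (σ : Set V) : Set (Set V) := {τ | τ ∈ K.faces ∧ σ ⊆ τ}

/-- Surjectivity: every simplex of the target is an image of a simplex. -/
def Map.Surj (f : Map Γ K) : Prop := ∀ σ ∈ K.faces, ∃ γ ∈ Γ.faces, f.toFun '' γ = σ

/-- Local surjectivity: stars surject onto stars. -/
def Map.LocSurj (f : Map Γ K) : Prop :=
  ∀ γ ∈ Γ.faces, ∀ τ ∈ K.star (f.toFun '' γ), ∃ γ' ∈ Γ.star γ, f.toFun '' γ' = τ

/-- Discreteness over vertices: no edge between distinct vertices with the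
same image. -/
def Map.DiscV (f : Map Γ K) : Prop :=
  ∀ x y : V, x ≠ y → f.toFun x = f.toFun y → ({x, y} : Set V) ∉ Γ.faces

/-- A bundle scenario: a surjective, locally surjective simplicial complex map
that is discrete over vertices. -/
def Map.IsBundle (f : Map Γ K) : Prop := f.Surj ∧ f.LocSurj ∧ f.DiscV

/-- `f` has the right lifting property with respect to `g`. -/
def RLP {A : Type*} {B : Type*} {CA : SComplex A} {CB : SComplex B}
    (g : Map CA CB) (f : Map Γ K) : Prop :=
  ∀ (u : Map CA Γ) (v : Map CB K), f.comp u = v.comp g →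
    ∃ h : Map CB Γ, h.comp g = u ∧ f.comp h = v

/-- The full simplicial complex `Δ^n` on `{0, …, n}`. -/
def deltaC (n : ℕ) : SComplex (Fin (n + 1)) where
  faces := {σ | σ.Nonempty}
  finite_mem := fun σ _ => σ.toFinite
  nonempty_mem := fun _ h => h
  down_closed := fun _ _ _ _ h => h
  singleton_mem := fun x => Set.singleton_nonempty x

/-- The simplicial complex map `Δ^m → Δ^n` induced by a function
`{0,…,m} → {0,…,n}`. -/
def deltaMap {m n : ℕ} (θ : Fin (m + 1) → Fin (n + 1)) : Map (deltaC m) (deltaC n) :=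
  ⟨θ, fun _ h => h.image θ⟩

/-- The empty simplicial complex. -/
def emptyC : SComplex Empty where
  faces := ∅
  finite_mem := fun _ h => h.elim
  nonempty_mem := fun _ h => h.elim
  down_closed := fun _ h => h.elim
  singleton_mem := fun x => x.elim

/-- The inclusion of the empty simplicial complex into `Δ^n`. -/
def emptyToDelta (n : ℕ) : Map emptyC (deltaC n) :=
  ⟨fun x => x.elim, fun _ h => h.elim⟩

/-- The type of faces of a simplicial complex. -/
abbrev Face (K : SComplex V) : Type u := {σ : Set V // σ ∈ K.faces}

/-- The nerve complex `ĤN K`: vertices are the simplices of `K`, and a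
nonempty finite set of simplices is a face iff its union is a face of `K`. -/
def nerveC (K : SComplex V) : SComplex K.Face where
  faces := {τ | τ.Finite ∧ τ.Nonempty ∧ (⋃ σ ∈ τ, (σ : Set V)) ∈ K.faces}
  finite_mem := fun _ h => h.1
  nonempty_mem := fun _ h => h.2.1
  down_closed := by
    intro τ h τ' hsub hne
    refine ⟨h.1.subset hsub, hne, K.down_closed h.2.2 ?_ ?_⟩
    · exact Set.biUnion_subset_biUnion_left hsub
    · obtain ⟨σ, hσ⟩ := hne
      obtain ⟨x, hx⟩ := K.nonempty_mem σ.1 σ.2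
      exact ⟨x, Set.mem_biUnion hσ hx⟩
  singleton_mem := fun σ => ⟨Set.finite_singleton σ, Set.singleton_nonempty σ, by
    simpa using σ.2⟩

/-- The map `ĤN f` induced on nerve complexes. -/
def nerveMap (f : Map Γ K) : Map (nerveC Γ) (nerveC K) where
  toFun γ := ⟨f.toFun '' γ.1, f.map_faces γ.2⟩
  map_faces := by
    intro τ hτ
    refine ⟨hτ.1.image _, hτ.2.1.image _, ?_⟩
    have h : (⋃ σ ∈ (fun γ : Γ.Face => (⟨f.toFun '' γ.1, f.map_faces γ.2⟩ : K.Face)) '' τ,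
        (σ : Set W)) = f.toFun '' (⋃ σ ∈ τ, (σ : Set V)) := by
      rw [Set.biUnion_image, Set.image_iUnion₂]
    exact Set.mem_of_eq_of_mem h (f.map_faces hτ.2.2)

/-- The unit `δ : K → ĤN K`, sending a vertex to the singleton simplex. -/
def deltaHat (K : SComplex V) : Map K (nerveC K) where
  toFun x := ⟨{x}, K.singleton_mem x⟩
  map_faces := by
    intro σ hσ
    refine ⟨(K.finite_mem σ hσ).image _, (K.nonempty_mem σ hσ).image _, ?_⟩
    have h : (⋃ τ ∈ (fun x : V => (⟨{x}, K.singleton_mem x⟩ : K.Face)) '' σ,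
        (τ : Set V)) = σ := by
      rw [Set.biUnion_image]
      exact Set.biUnion_of_singleton σ
    exact Set.mem_of_eq_of_mem h hσ

/-- The multiplication `μ : ĤN (ĤN K) → ĤN K` of the nerve complex monad,
sending a set of simplices to its union. -/
def muMap (K : SComplex V) : Map (nerveC (nerveC K)) (nerveC K) where
  toFun τ := ⟨⋃ σ ∈ τ.1, (σ : Set V), τ.2.2.2⟩
  map_faces := by
    intro T hT
    refine ⟨hT.1.image _, hT.2.1.image _, ?_⟩
    have h : (⋃ σ ∈ (fun τ : (nerveC K).Face =>
          (⟨⋃ σ ∈ τ.1, (σ : Set V), τ.2.2.2⟩ : K.Face)) '' T, (σ : Set V))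
        = ⋃ σ ∈ (⋃ τ ∈ T, (τ : Set K.Face)), (σ : Set V) := by
      rw [Set.biUnion_image]
      ext x
      simp only [Set.mem_iUnion, Set.mem_setOf_eq]
      tauto
    exact Set.mem_of_eq_of_mem h hT.2.2.2.2

/-- The vertex type of the pull-back of `f : Γ → K` along `π : K' → K`. -/
def PB {Γ : SComplex V} {K : SComplex W} {K' : SComplex V'} (f : Map Γ K) (π : Map K' K) :
    Type (max u w) :=
  {q : V × V' // f.toFun q.1 = π.toFun q.2}

/-- The pull-back of `f : Γ → K` along `π : K' → K`: vertices are pairs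
`(x, y)` with `f x = π y`, and a set of pairs is a simplex iff both coordinate
projections are simplices. -/
def pullback {Γ : SComplex V} {K : SComplex W} {K' : SComplex V'} (f : Map Γ K) (π : Map K' K) :
    SComplex (PB f π) where
  faces := {τ | ((fun q : PB f π => q.1.1) '' τ) ∈ Γ.faces ∧
    ((fun q : PB f π => q.1.2) '' τ) ∈ K'.faces}
  finite_mem := by
    intro τ h
    have h1 : (Subtype.val '' τ).Finite := by
      refine Set.Finite.subset (Set.Finite.prod (Γ.finite_mem _ h.1) (K'.finite_mem _ h.2)) ?_
      rintro q ⟨r, hr, rfl⟩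
      exact ⟨⟨r, hr, rfl⟩, ⟨r, hr, rfl⟩⟩
    exact Set.Finite.of_finite_image h1 Subtype.val_injective.injOn
  nonempty_mem := fun τ h => Set.Nonempty.of_image (Γ.nonempty_mem _ h.1)
  down_closed := fun τ h τ' hsub hne =>
    ⟨Γ.down_closed h.1 (Set.image_mono hsub) (hne.image _),
     K'.down_closed h.2 (Set.image_mono hsub) (hne.image _)⟩
  singleton_mem := fun q => by
    constructor
    · simpa using Γ.singleton_mem q.1.1
    · simpa using K'.singleton_mem q.1.2

/-- First projection of the pull-back. -/
def pbFst {Γ : SComplex V} {K : SComplex W} {K' : SComplex V'} (f : Map Γ K) (π : Map K' K) :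
    Map (pullback f π) Γ :=
  ⟨fun q => q.1.1, fun _ h => h.1⟩

/-- Second projection of the pull-back (the pulled-back bundle). -/
def pbSnd {Γ : SComplex V} {K : SComplex W} {K' : SComplex V'} (f : Map Γ K) (π : Map K' K) :
    Map (pullback f π) K' :=
  ⟨fun q => q.1.2, fun _ h => h.2⟩

/-- The event complex `E_O K` of a scenario `(K, O)`: vertices are pairs
`(x, o)` with `o ∈ O x`, and simplices are graphs of outcome assignments over
simplices of `K`. -/
def eventComplex (K : SComplex V) (O : V → Type v) : SComplex ((x : V) × O x) where
  faces := {τ | (Sigma.fst '' τ) ∈ K.faces ∧ Set.InjOn Sigma.fst τ}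
  finite_mem := fun _ h => Set.Finite.of_finite_image (K.finite_mem _ h.1) h.2
  nonempty_mem := fun _ h => Set.Nonempty.of_image (K.nonempty_mem _ h.1)
  down_closed := fun τ h τ' hsub hne =>
    ⟨K.down_closed h.1 (Set.image_mono hsub) (hne.image _), h.2.mono hsub⟩
  singleton_mem := fun p => ⟨by simpa using K.singleton_mem p.1, Set.injOn_singleton _ _⟩

/-- The canonical projection `E_O K → K` of a scenario. -/
def eventProj (K : SComplex V) (O : V → Type v) : Map (eventComplex K O) K :=
  ⟨Sigma.fst, fun _ h => h.1⟩

end SComplex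

open SComplex

/-- `R`-distributions on a set `U`: finitely supported `R`-valued functions
summing to `1`. -/
def Dist (R : Type u) [CommSemiring R] (U : Type v) : Type (max u v) :=
  {p : U →₀ R // p.sum (fun _ r => r) = 1}

/-- Push-forward of distributions along a function. -/
noncomputable def Dist.map {R : Type u} [CommSemiring R] {U : Type v} {U' : Type w} (g : U → U')
    (p : Dist R U) : Dist R U' :=
  ⟨Finsupp.mapDomain g p.1, by
    rw [Finsupp.sum_mapDomain_index (fun _ => rfl) (fun _ _ _ => rfl)]
    exact p.2⟩

/-- The Dirac distribution at a point. -/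
noncomputable def Dist.pure {R : Type u} [CommSemiring R] {U : Type v} (u : U) : Dist R U :=
  ⟨Finsupp.single u 1, by rw [Finsupp.sum_single_index rfl]⟩

namespace SComplex

/-- The fiber of a simplicial complex map over a simplex of the target. -/
abbrev Map.fiber {Γ : SComplex V} {K : SComplex W} (f : Map Γ K) (σ : Set W) : Type u :=
  {γ : Set V // γ ∈ Γ.faces ∧ f.toFun '' γ = σ}

/-- The restriction map between fibers, sending `γ` over `σ` to the
subsimplex of `γ` lying over `σ' ⊆ σ`.  (For bundle scenarios this is the
unique such subsimplex.) -/
def Map.resFiber {Γ : SComplex V} {K : SComplex W} (f : Map Γ K) {σ σ' : Set W}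
    (hσ' : σ' ∈ K.faces) (h : σ' ⊆ σ) (γ : f.fiber σ) : f.fiber σ' := by
  have hne : ({y | y ∈ γ.1 ∧ f.toFun y ∈ σ'} : Set V).Nonempty := by
    obtain ⟨x, hx⟩ := K.nonempty_mem σ' hσ'
    have hx' : x ∈ f.toFun '' γ.1 := (Set.ext_iff.mp γ.2.2 x).mpr (h hx)
    obtain ⟨y, hy, rfl⟩ := hx'
    exact ⟨y, hy, hx⟩
  refine ⟨{y | y ∈ γ.1 ∧ f.toFun y ∈ σ'},
    Γ.down_closed γ.2.1 (fun y hy => hy.1) hne, ?_⟩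
  ext x
  constructor
  · rintro ⟨y, ⟨hy, hfy⟩, rfl⟩
    exact hfy
  · intro hx
    have hx' : x ∈ f.toFun '' γ.1 := (Set.ext_iff.mp γ.2.2 x).mpr (h hx)
    obtain ⟨y, hy, rfl⟩ := hx'
    exact ⟨y, ⟨hy, hx⟩, rfl⟩

/-- An empirical model on a bundle scenario `f : Γ → K`: a compatible family
of distributions on the fibers of `f`. -/
structure EmpiricalModel (R : Type t) [CommSemiring R] {Γ : SComplex V} {K : SComplex W}
    (f : Map Γ K) where
  dist : ∀ σ, σ ∈ K.faces → Dist R (f.fiber σ)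
  compat : ∀ σ (hσ : σ ∈ K.faces) σ' (hσ' : σ' ∈ K.faces) (h : σ' ⊆ σ),
    Dist.map (f.resFiber hσ' h) (dist σ hσ) = dist σ' hσ'

/-- An empirical model on a scenario `(K, O)`: a compatible family of
distributions on joint outcome assignments over each measurement context. -/
structure ScenEmp (R : Type t) [CommSemiring R] (K : SComplex V) (O : V → Type v) where
  dist : ∀ σ, σ ∈ K.faces → Dist R (∀ x : σ, O x.1)
  compat : ∀ σ (hσ : σ ∈ K.faces) σ' (hσ' : σ' ∈ K.faces) (h : σ' ⊆ σ),
    Dist.map (fun (s : ∀ x : σ, O x.1) (x : σ') => s ⟨x.1, h x.2⟩) (dist σ hσ) = dist σ' hσ'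

end SComplex

namespace SComplex

variable {V : Type u} {W : Type v} {V' : Type w}


/-- The defining property of the push-forward `π_* p` of an empirical model
`p` on `f` along a simplicial relation `π : K' → ĤN K` (a simplicial complex
map into the nerve complex): over a simplex `σ'` of `K'`, the value at a fiber
element `γ'` of the pulled-back bundle is the value of `p` over the union
`π̄(σ')` at the union of the first components of `γ'`. -/
def piPushSpec {Γ : SComplex V} {K : SComplex W} {K' : SComplex V'}
    (f : Map Γ K) (π : Map K' (nerveC K)) {R : Type t} [CommSemiring R]
    (p : EmpiricalModel R f) (q : EmpiricalModel R (pbSnd (nerveMap f) π)) : Prop :=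
  ∀ σ' (hσ' : σ' ∈ K'.faces) (γ' : (pbSnd (nerveMap f) π).fiber σ')
    (hu : (⋃ x' ∈ σ', ((π.toFun x' : K.Face) : Set W)) ∈ K.faces)
    (γ : f.fiber (⋃ x' ∈ σ', ((π.toFun x' : K.Face) : Set W))),
    (γ : Set V) = (⋃ r ∈ γ'.1, ((r.1.1 : Γ.Face) : Set V)) →
    (q.dist σ' hσ').1 γ' = (p.dist _ hu).1 γ

/-- The fiber element of the event bundle given by the graph of an outcome
assignment `s` over a simplex `σ`. -/
def graphFiber (K : SComplex V) (O : V → Type v) {σ : Set V} (hσ : σ ∈ K.faces)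
    (s : ∀ x : σ, O x.1) : (eventProj K O).fiber σ := by
  refine ⟨{p : (x : V) × O x | ∃ h : p.1 ∈ σ, p.2 = s ⟨p.1, h⟩}, ⟨?_, ?_⟩, ?_⟩
  · have h : Sigma.fst '' {p : (x : V) × O x | ∃ h : p.1 ∈ σ, p.2 = s ⟨p.1, h⟩} = σ := by
      ext x
      constructor
      · rintro ⟨p, ⟨hp, _⟩, rfl⟩; exact hp
      · intro hx; exact ⟨⟨x, s ⟨x, hx⟩⟩, ⟨hx, rfl⟩, rfl⟩
    exact Set.mem_of_eq_of_mem h hσ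
  · rintro ⟨x₁, o₁⟩ ⟨h₁, ho₁⟩ ⟨x₂, o₂⟩ ⟨h₂, ho₂⟩ hx
    obtain rfl : x₁ = x₂ := hx
    exact congrArg (Sigma.mk x₁) (ho₁.trans ho₂.symm)
  · ext x
    constructor
    · rintro ⟨p, ⟨hp, _⟩, rfl⟩; exact hp
    · intro hx; exact ⟨⟨x, s ⟨x, hx⟩⟩, ⟨hx, rfl⟩, rfl⟩

/-- Push-forward of a fiber element along a map over the base. -/
def pushFiber {Γ : SComplex V} {Γ' : SComplex V'} {K : SComplex W}
    (f : Map Γ K) (g : Map Γ' K) (α : Map Γ Γ') (hc : g.comp α = f) (σ : Set W)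
    (γ : f.fiber σ) : g.fiber σ := by
  refine ⟨α.toFun '' γ.1, α.map_faces γ.2.1, ?_⟩
  rw [← Set.image_comp]
  have h : g.toFun ∘ α.toFun = f.toFun := congrArg Map.toFun hc
  rw [h]
  exact γ.2.2

/-- Sections of a bundle scenario. -/
def BSection {Γ : SComplex V} {K : SComplex W} (f : Map Γ K) : Type _ :=
  {s : Map K Γ // f.comp s = Map.id K}

/-- Evaluation of a section of a bundle scenario at a simplex of the base,
giving an element of the fiber. -/
def BSection.ev {Γ : SComplex V} {K : SComplex W} (f : Map Γ K) (σ : Set W)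
    (hσ : σ ∈ K.faces) (s : BSection f) : f.fiber σ := by
  refine ⟨s.1.toFun '' σ, s.1.map_faces hσ, ?_⟩
  rw [← Set.image_comp]
  have h : f.toFun ∘ s.1.toFun = fun x => x := congrArg Map.toFun s.2
  rw [h, Set.image_id']

/-- Noncontextuality of an empirical model on a bundle scenario: it is a
mixture of deterministic models coming from sections. -/
def BundleNC (R : Type t) [CommSemiring R] {Γ : SComplex V} {K : SComplex W}
    (f : Map Γ K) (p : EmpiricalModel R f) : Prop :=
  ∃ d : Dist R (BSection f), ∀ σ (hσ : σ ∈ K.faces),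
    p.dist σ hσ = Dist.map (BSection.ev f σ hσ) d

/-- Noncontextuality of an empirical model on a scenario `(K, O)`: it is a
mixture of deterministic models coming from global outcome assignments. -/
def ScenNC (R : Type t) [CommSemiring R] (K : SComplex V) (O : V → Type v)
    (e : ScenEmp R K O) : Prop :=
  ∃ d : Dist R (∀ x : V, O x), ∀ σ (hσ : σ ∈ K.faces),
    e.dist σ hσ = Dist.map (fun (g : ∀ x : V, O x) (x : σ) => g x.1) d

end SComplex

end Ctx

namespace Ctx
open SComplex

/-- simplicial complex maps `K' → ĤN K` biject with simplicial
relations from `K'` to `K`. -/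
theorem statement_1 {V' : Type w} {V : Type u} (K' : SComplex V') (K : SComplex V) :
    Set.BijOn (fun g : Map K' (nerveC K) => {q : V' × V | q.2 ∈ (g.toFun q.1 : Set V)})
      Set.univ
      {π : Set (V' × V) | ∀ σ' ∈ K'.faces, {x | ∃ x' ∈ σ', (x', x) ∈ π} ∈ K.faces} := by
  refine ⟨?_, ?_, ?_⟩
  · intro g _ σ' hσ'
    have h := g.map_faces hσ'
    have heq : {x | ∃ x' ∈ σ', (x', x) ∈
        {q : V' × V | q.2 ∈ (g.toFun q.1 : Set V)}} =
        ⋃ σ ∈ g.toFun '' σ', (σ : Set V) := by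
      ext x
      simp only [Set.mem_setOf_eq, Set.mem_iUnion, Set.mem_image]
      constructor
      · rintro ⟨x', hx', hx⟩; exact ⟨g.toFun x', ⟨x', hx', rfl⟩, hx⟩
      · rintro ⟨σ, ⟨x', hx', rfl⟩, hx⟩; exact ⟨x', hx', hx⟩
    rw [heq]
    exact h.2.2
  · intro g₁ _ g₂ _ h
    refine Map.ext (funext fun x' => Subtype.ext (Set.ext fun x => ?_))
    exact Set.ext_iff.mp h (x', x)
  · intro π hπ
    have hsing : ∀ x' : V', {x | (x', x) ∈ π} ∈ K.faces := by
      intro x'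
      have := hπ {x'} (K'.singleton_mem x')
      simpa using this
    refine ⟨⟨fun x' => ⟨{x | (x', x) ∈ π}, hsing x'⟩, ?_⟩, Set.mem_univ _, ?_⟩
    · intro σ' hσ'
      refine ⟨(K'.finite_mem σ' hσ').image _, (K'.nonempty_mem σ' hσ').image _, ?_⟩
      have heq : (⋃ σ ∈ (fun x' : V' => (⟨{x | (x', x) ∈ π}, hsing x'⟩ : K.Face)) '' σ',
          (σ : Set V)) = {x | ∃ x' ∈ σ', (x', x) ∈ π} := by
        rw [Set.biUnion_image]
        ext x
        simp only [Set.mem_iUnion, Set.mem_setOf_eq, exists_prop]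
      rw [heq]
      exact hπ σ' hσ'
    · ext ⟨x', x⟩
      simp

end Ctx
end

section
/- If f: Γ → Σ is a bundle scenario and π: Σ' → Σ is any simplicial complex map, then the projection f̃: π*(Γ) → Σ', (x, y) ↦ y, is a bundle scenario. -/
universe u v w t

namespace Ctx
open SComplex

/-- the pull-back of a bundle scenario along any simplicial
complex map is a bundle scenario. -/
theorem statement_2 {V : Type u} {W : Type v} {V' : Type w}
    {Γ : SComplex V} {K : SComplex W} {K' : SComplex V'}
    (f : Map Γ K) (π : Map K' K) (hf : f.IsBundle) : (pbSnd f π).IsBundle := by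
  obtain ⟨hs, hl, hd⟩ := hf
  refine ⟨?_, ?_, ?_⟩
  · -- surjectivity
    intro σ' hσ'
    obtain ⟨γ, hγ, hfγ⟩ := hs (π.toFun '' σ') (π.map_faces hσ')
    set τ : Set (PB f π) := {q | q.1.1 ∈ γ ∧ q.1.2 ∈ σ'} with hτdef
    have hsnd : (fun q : PB f π => q.1.2) '' τ = σ' := by
      apply Set.Subset.antisymm
      · rintro y ⟨q, hq, rfl⟩; exact hq.2
      · intro y hy
        have : π.toFun y ∈ f.toFun '' γ := by rw [hfγ]; exact ⟨y, hy, rfl⟩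
        obtain ⟨x, hx, hfx⟩ := this
        exact ⟨⟨(x, y), hfx⟩, ⟨hx, hy⟩, rfl⟩
    have hfst_sub : (fun q : PB f π => q.1.1) '' τ ⊆ γ := by
      rintro x ⟨q, hq, rfl⟩; exact hq.1
    have hne : ((fun q : PB f π => q.1.1) '' τ).Nonempty := by
      obtain ⟨x, hx⟩ := Γ.nonempty_mem γ hγ
      have : f.toFun x ∈ π.toFun '' σ' := by rw [← hfγ]; exact ⟨x, hx, rfl⟩
      obtain ⟨y, hy, hpy⟩ := this
      exact ⟨x, ⟨(x, y), hpy.symm⟩, ⟨hx, hy⟩, rfl⟩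
    exact ⟨τ, ⟨Γ.down_closed hγ hfst_sub hne, hsnd ▸ hσ'⟩, hsnd⟩
  · -- local surjectivity
    intro γ' hγ' τ hτ
    obtain ⟨hτK, hsub⟩ := hτ
    -- key: f '' (fst '' γ') = π '' (snd '' γ')
    have hkey : f.toFun '' ((fun q : PB f π => q.1.1) '' γ')
        = π.toFun '' ((fun q : PB f π => q.1.2) '' γ') := by
      ext w
      constructor
      · rintro ⟨x, ⟨q, hq, rfl⟩, rfl⟩
        exact ⟨q.1.2, ⟨q, hq, rfl⟩, (q.2).symm⟩
      · rintro ⟨y, ⟨q, hq, rfl⟩, rfl⟩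
        exact ⟨q.1.1, ⟨q, hq, rfl⟩, q.2⟩
    have hstar : π.toFun '' τ ∈ K.star (f.toFun '' ((fun q : PB f π => q.1.1) '' γ')) := by
      refine ⟨π.map_faces hτK, ?_⟩
      rw [hkey]
      exact Set.image_mono hsub
    obtain ⟨δ, ⟨hδ, hγδ⟩, hfδ⟩ := hl _ hγ'.1 _ hstar
    set τ' : Set (PB f π) := {q | q.1.1 ∈ δ ∧ q.1.2 ∈ τ} with hτ'def
    have hγ'sub : γ' ⊆ τ' := by
      intro q hq
      exact ⟨hγδ ⟨q, hq, rfl⟩, hsub ⟨q, hq, rfl⟩⟩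
    have hsnd : (fun q : PB f π => q.1.2) '' τ' = τ := by
      apply Set.Subset.antisymm
      · rintro y ⟨q, hq, rfl⟩; exact hq.2
      · intro y hy
        have : π.toFun y ∈ f.toFun '' δ := by rw [hfδ]; exact ⟨y, hy, rfl⟩
        obtain ⟨x, hx, hfx⟩ := this
        exact ⟨⟨(x, y), hfx⟩, ⟨hx, hy⟩, rfl⟩
    have hfst_sub : (fun q : PB f π => q.1.1) '' τ' ⊆ δ := by
      rintro x ⟨q, hq, rfl⟩; exact hq.1
    have hγ'ne : γ'.Nonempty :=
      Set.Nonempty.of_image (Γ.nonempty_mem _ hγ'.1)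
    have hne : ((fun q : PB f π => q.1.1) '' τ').Nonempty :=
      ((hγ'ne.mono hγ'sub).image _)
    refine ⟨τ', ⟨⟨Γ.down_closed hδ hfst_sub hne, hsnd ▸ hτK⟩, hγ'sub⟩, hsnd⟩
  · -- discreteness over vertices
    intro p q hne heq hface
    have hx : p.1.1 ≠ q.1.1 := by
      intro h
      exact hne (Subtype.ext (Prod.ext h heq))
    have hfx : f.toFun p.1.1 = f.toFun q.1.1 := by
      rw [p.2, q.2]
      exact congrArg π.toFun heq
    apply hd p.1.1 q.1.1 hx hfx
    have himg : (fun r : PB f π => r.1.1) '' ({p, q} : Set (PB f π))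
        = ({p.1.1, q.1.1} : Set V) := by
      simp [Set.image_insert_eq]
    exact himg ▸ hface.1

end Ctx
end

section
/- If f: Γ → Σ is a bundle scenario, then the induced map on nerve complexes ĤNf: ĤNΓ → ĤNΣ, γ ↦ f(γ), is a bundle scenario. -/
universe u v w t

namespace Ctx
open SComplex

/-- Auxiliary: given a fiber element `G` over the union of a finite nonempty
family `τ` of faces of `K`, the family of restrictions of `G` to the members of
`τ` is a finite nonempty family of faces of `Γ` whose union is `G` and whose
image under `ĤN f` is `τ`. -/
lemma nerve_pieces {V : Type u} {W : Type v} {Γ : SComplex V} {K : SComplex W}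
    (f : Map Γ K) {τ : Set K.Face} (hfin : τ.Finite) (hne : τ.Nonempty)
    (G : f.fiber (⋃ σ ∈ τ, (σ : Set W))) :
    ∃ S : Set Γ.Face, S.Finite ∧ S.Nonempty ∧
      (⋃ g ∈ S, (g : Set V)) = G.1 ∧ (nerveMap f).toFun '' S = τ := by
  have hsub : ∀ σ : τ, (σ : Set W) ⊆ ⋃ σ ∈ τ, (σ : Set W) := fun σ =>
    Set.subset_biUnion_of_mem σ.2
  set g : τ → Γ.Face := fun σ =>
    ⟨(f.resFiber σ.1.2 (hsub σ) G).1, (f.resFiber σ.1.2 (hsub σ) G).2.1⟩ with hg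
  haveI : Finite τ := hfin.to_subtype
  haveI : Nonempty τ := hne.to_subtype
  refine ⟨Set.range g, Set.finite_range g, Set.range_nonempty g, ?_, ?_⟩
  · ext y
    simp only [Set.mem_iUnion, Set.mem_range, exists_prop, exists_exists_eq_and]
    constructor
    · rintro ⟨σ, hy⟩
      exact hy.1
    · intro hy
      have hfy : f.toFun y ∈ ⋃ σ ∈ τ, (σ : Set W) := G.2.2 ▸ ⟨y, hy, rfl⟩
      simp only [Set.mem_iUnion, exists_prop] at hfy
      obtain ⟨σ, hσ, hfy⟩ := hfy
      exact ⟨⟨σ, hσ⟩, hy, hfy⟩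
  · rw [← Set.range_comp]
    have hcomp : (nerveMap f).toFun ∘ g = Subtype.val := by
      funext σ
      exact Subtype.ext (f.resFiber σ.1.2 (hsub σ) G).2.2
    rw [hcomp, Subtype.range_val]

/-- the nerve complex map `ĤN f` of a bundle scenario is a
bundle scenario. -/
theorem statement_3 {V : Type u} {W : Type v} {Γ : SComplex V} {K : SComplex W}
    (f : Map Γ K) (hf : f.IsBundle) : (nerveMap f).IsBundle := by
  obtain ⟨hs, hl, hd⟩ := hf
  refine ⟨?_, ?_, ?_⟩
  · -- surjectivity
    rintro τ ⟨hfin, hne, hu⟩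
    obtain ⟨γ, hγ, hγim⟩ := hs _ hu
    obtain ⟨S, hSfin, hSne, hSu, hSim⟩ := nerve_pieces f hfin hne ⟨γ, hγ, hγim⟩
    exact ⟨S, ⟨hSfin, hSne, hSu ▸ hγ⟩, hSim⟩
  · -- local surjectivity
    rintro τ₀ ⟨hfin₀, hne₀, hu₀⟩ T ⟨⟨hTfin, hTne, hTu⟩, hTsub⟩
    -- the union of `τ₀` is a face of `Γ`, and the union of `T` lies in the
    -- star of its image
    have himsub : f.toFun '' (⋃ g ∈ τ₀, (g : Set V)) ⊆ ⋃ σ ∈ T, (σ : Set W) := by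
      rintro w ⟨y, hy, rfl⟩
      simp only [Set.mem_iUnion, exists_prop] at hy ⊢
      obtain ⟨g, hg, hy⟩ := hy
      exact ⟨(nerveMap f).toFun g, hTsub ⟨g, hg, rfl⟩, ⟨y, hy, rfl⟩⟩
    obtain ⟨γ', ⟨hγ', hγsub⟩, hγ'im⟩ := hl _ hu₀ _ ⟨hTu, himsub⟩
    obtain ⟨S, hSfin, hSne, hSu, hSim⟩ := nerve_pieces f hTfin hTne ⟨γ', hγ', hγ'im⟩
    refine ⟨τ₀ ∪ S, ⟨⟨hfin₀.union hSfin, hne₀.mono Set.subset_union_left, ?_⟩,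
      Set.subset_union_left⟩, ?_⟩
    · have : (⋃ g ∈ τ₀ ∪ S, (g : Set V)) = γ' := by
        rw [Set.biUnion_union, hSu]
        exact Set.union_eq_self_of_subset_left hγsub
      exact this ▸ hγ'
    · rw [Set.image_union, hSim]
      exact Set.union_eq_self_of_subset_left hTsub
  · -- discreteness over vertices
    intro γ₁ γ₂ hne12 heq hface
    have hU : (γ₁ : Set V) ∪ (γ₂ : Set V) ∈ Γ.faces := by
      have h := hface.2.2
      rwa [Set.biUnion_pair] at h
    have heq' : f.toFun '' (γ₁ : Set V) = f.toFun '' (γ₂ : Set V) :=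
      congrArg Subtype.val heq
    have key : ∀ a b : Γ.Face, f.toFun '' (a : Set V) = f.toFun '' (b : Set V) →
        (a : Set V) ∪ (b : Set V) ∈ Γ.faces → (a : Set V) ⊆ (b : Set V) := by
      intro a b him hab x hx
      have hfx : f.toFun x ∈ f.toFun '' (b : Set V) := him ▸ ⟨x, hx, rfl⟩
      obtain ⟨y, hy, hyx⟩ := hfx
      by_cases hxy : x = y
      · exact hxy ▸ hy
      · exfalso
        refine hd x y hxy hyx.symm (Γ.down_closed hab ?_ ⟨x, Set.mem_insert x {y}⟩)
        rintro z (rfl | rfl)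
        · exact Or.inl hx
        · exact Or.inr hy
    refine hne12 (Subtype.ext (Set.Subset.antisymm (key γ₁ γ₂ heq' hU) ?_))
    exact key γ₂ γ₁ heq'.symm (Set.union_comm _ _ ▸ hU)

end Ctx
end

section
/- For a simplicial complex map f: Γ → Σ, the following are equivalent: (1) f is locally surjective; (2) f has the right lifting property with respect to every injective simplicial complex map Δ^m ↪ Δ^n (m ≥ 0); (3) f has the right lifting property with respect to the inclusion d^n: Δ^{n-1} ↪ Δ^n (induced by the inclusion {0,…,n−1} ⊆ {0,…,n}) for every n ≥ 1. -/
universe u v w t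

namespace Ctx
open SComplex



lemma aux_locsurj_rlp {V : Type u} {W : Type v} {Γ : SComplex V} {K : SComplex W}
    (f : Map Γ K) (hf : f.LocSurj) {m n : ℕ} (g : Map (deltaC m) (deltaC n))
    (hg : Function.Injective g.toFun) : RLP g f := by
  intro u v hcomm
  have huniv_m : (Set.univ : Set (Fin (m+1))) ∈ (deltaC m).faces := Set.univ_nonempty
  have huniv_n : (Set.univ : Set (Fin (n+1))) ∈ (deltaC n).faces := Set.univ_nonempty
  have hγf : u.toFun '' Set.univ ∈ Γ.faces := u.map_faces huniv_m
  have hτf : v.toFun '' Set.univ ∈ K.faces := v.map_faces huniv_n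
  have hcomm' : f.toFun ∘ u.toFun = v.toFun ∘ g.toFun := congrArg Map.toFun hcomm
  have hsub : f.toFun '' (u.toFun '' Set.univ) ⊆ v.toFun '' Set.univ := by
    rintro _ ⟨_, ⟨i, -, rfl⟩, rfl⟩
    exact ⟨g.toFun i, trivial, (congrFun hcomm' i).symm⟩
  obtain ⟨γ', ⟨hγ'f, hγγ'⟩, hfγ'⟩ :=
    hf (u.toFun '' Set.univ) hγf (v.toFun '' Set.univ) ⟨hτf, hsub⟩
  have hchoice : ∀ j : Fin (n+1), ∃ y, y ∈ γ' ∧ f.toFun y = v.toFun j := by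
    intro j
    have : v.toFun j ∈ f.toFun '' γ' := hfγ' ▸ ⟨j, trivial, rfl⟩
    obtain ⟨y, hy, hfy⟩ := this
    exact ⟨y, hy, hfy⟩
  classical
  set hfun : Fin (n+1) → V := fun j =>
    if hj : ∃ i, g.toFun i = j then u.toFun hj.choose else (hchoice j).choose with hfundef
  have hmem : ∀ j, hfun j ∈ γ' := by
    intro j
    by_cases hj : ∃ i, g.toFun i = j
    · simp only [hfundef, dif_pos hj]; exact hγγ' ⟨hj.choose, trivial, rfl⟩
    · simp only [hfundef, dif_neg hj]; exact ((hchoice j).choose_spec).1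
  have hfh : ∀ j, f.toFun (hfun j) = v.toFun j := by
    intro j
    by_cases hj : ∃ i, g.toFun i = j
    · simp only [hfundef, dif_pos hj]
      have h1 := congrFun hcomm' hj.choose
      simp only [Function.comp] at h1
      rw [h1, hj.choose_spec]
    · simp only [hfundef, dif_neg hj]; exact ((hchoice j).choose_spec).2
  have hhg : ∀ i, hfun (g.toFun i) = u.toFun i := by
    intro i
    have hj : ∃ i', g.toFun i' = g.toFun i := ⟨i, rfl⟩
    simp only [hfundef, dif_pos hj]
    rw [hg hj.choose_spec]
  refine ⟨⟨hfun, ?_⟩, ?_, ?_⟩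
  · intro σ hσ
    exact Γ.down_closed hγ'f (by rintro _ ⟨j, -, rfl⟩; exact hmem j) (hσ.image _)
  · exact SComplex.Map.ext (funext hhg)
  · exact SComplex.Map.ext (funext hfh)

lemma aux_enum {X : Type u} (s : Set X) (h : s.Finite) (hne : s.Nonempty) :
    ∃ (n : ℕ) (a : Fin (n+1) → X), Set.range a = s := by
  classical
  haveI := h.fintype
  have hc : 0 < Fintype.card s := Fintype.card_pos_iff.mpr hne.to_subtype
  obtain ⟨k, hk⟩ := Nat.exists_eq_succ_of_ne_zero hc.ne'
  refine ⟨k, fun i => ((Fintype.equivFin s).symm (finCongr hk.symm i) : X), ?_⟩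
  rw [show (fun i : Fin (k+1) => ((Fintype.equivFin s).symm (finCongr hk.symm i) : X))
      = Subtype.val ∘ (fun i : Fin (k+1) => (Fintype.equivFin s).symm (finCongr hk.symm i))
      from rfl, Set.range_comp]
  have h2 : Set.range (fun i : Fin (k+1) => (Fintype.equivFin s).symm (finCongr hk.symm i))
      = Set.univ :=
    Set.range_eq_univ.mpr ((Equiv.surjective _).comp (finCongr hk.symm).surjective)
  rw [h2, Set.image_univ, Subtype.range_coe]

lemma aux_rlp_locsurj {V : Type u} {W : Type v} {Γ : SComplex V} {K : SComplex W}
    (f : Map Γ K)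
    (hR : ∀ n : ℕ, RLP (deltaMap (Fin.castSucc : Fin (n + 1) → Fin (n + 2))) f) :
    f.LocSurj := by
  have step : ∀ γ ∈ Γ.faces, ∀ τ ∈ K.faces, f.toFun '' γ ⊆ τ → ∀ w ∈ τ,
      ∃ γ'' ∈ Γ.star γ, f.toFun '' γ'' = insert w (f.toFun '' γ) := by
    intro γ hγ τ hτ hsub w hw
    obtain ⟨n, a, ha⟩ := aux_enum γ (Γ.finite_mem γ hγ) (Γ.nonempty_mem γ hγ)
    have hamem : ∀ i, a i ∈ γ := fun i => ha ▸ Set.mem_range_self i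
    let u : Map (deltaC n) Γ :=
      ⟨a, fun σ hσ => Γ.down_closed hγ
        (by rintro _ ⟨i, -, rfl⟩; exact hamem i) (hσ.image _)⟩
    let vf : Fin (n+2) → W := Fin.lastCases w (fun i => f.toFun (a i))
    have hvmem : ∀ j, vf j ∈ τ := by
      intro j
      induction j using Fin.lastCases with
      | last => simpa [vf] using hw
      | cast i =>
        simp only [vf, Fin.lastCases_castSucc]
        exact hsub ⟨a i, hamem i, rfl⟩
    let v : Map (deltaC (n+1)) K :=
      ⟨vf, fun σ hσ => K.down_closed hτ
        (by rintro _ ⟨j, -, rfl⟩; exact hvmem j) (hσ.image _)⟩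
    have hcomm : f.comp u = v.comp (deltaMap (Fin.castSucc : Fin (n+1) → Fin (n+2))) :=
      SComplex.Map.ext (funext fun i => by
        simp only [Map.comp, deltaMap, Function.comp, u, v, vf, Fin.lastCases_castSucc])
    obtain ⟨h, hh1, hh2⟩ := hR n u v hcomm
    have hh1' : h.toFun ∘ Fin.castSucc = a := congrArg Map.toFun hh1
    have hh2' : f.toFun ∘ h.toFun = vf := congrArg Map.toFun hh2
    have huniv : (Set.univ : Set (Fin (n+2))) ∈ (deltaC (n+1)).faces := Set.univ_nonempty
    refine ⟨h.toFun '' Set.univ, ⟨h.map_faces huniv, ?_⟩, ?_⟩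
    · intro x hx
      rw [← ha] at hx
      obtain ⟨i, rfl⟩ := hx
      exact ⟨Fin.castSucc i, trivial, congrFun hh1' i⟩
    · rw [← Set.image_comp, hh2', Set.image_univ]
      ext y
      constructor
      · rintro ⟨j, rfl⟩
        induction j using Fin.lastCases with
        | last => simp [vf]
        | cast i =>
          simp only [vf, Fin.lastCases_castSucc]
          exact Set.mem_insert_of_mem _ ⟨a i, hamem i, rfl⟩
      · rintro (rfl | ⟨x, hx, rfl⟩)
        · exact ⟨Fin.last _, by simp [vf]⟩
        · rw [← ha] at hx
          obtain ⟨i, rfl⟩ := hx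
          exact ⟨Fin.castSucc i, by simp [vf]⟩
  intro γ0 hγ0 τ hτ
  have hτfin : τ.Finite := K.finite_mem τ hτ.1
  suffices main : ∀ N : ℕ, ∀ γ ∈ Γ.faces, f.toFun '' γ ⊆ τ →
      (τ \ f.toFun '' γ).ncard ≤ N → ∃ γ' ∈ Γ.star γ, f.toFun '' γ' = τ from
    main _ γ0 hγ0 hτ.2 le_rfl
  intro N
  induction N with
  | zero =>
    intro γ hγ hsub hcard
    have hemp : τ \ f.toFun '' γ = ∅ :=
      (Set.ncard_eq_zero (hτfin.diff)).mp (Nat.le_zero.mp hcard)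
    exact ⟨γ, ⟨hγ, subset_rfl⟩, hsub.antisymm (Set.diff_eq_empty.mp hemp)⟩
  | succ N ih =>
    intro γ hγ hsub hcard
    rcases Set.eq_empty_or_nonempty (τ \ f.toFun '' γ) with hemp | ⟨w, hw⟩
    · exact ⟨γ, ⟨hγ, subset_rfl⟩, hsub.antisymm (Set.diff_eq_empty.mp hemp)⟩
    · obtain ⟨γ'', ⟨hγ''f, hγγ''⟩, hfγ''⟩ := step γ hγ τ hτ.1 hsub w hw.1
      have hsub'' : f.toFun '' γ'' ⊆ τ := by
        rw [hfγ'']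
        exact Set.insert_subset hw.1 hsub
      have hcard'' : (τ \ f.toFun '' γ'').ncard ≤ N := by
        rw [hfγ'']
        have he : τ \ insert w (f.toFun '' γ) = (τ \ f.toFun '' γ) \ {w} := by
          ext x
          simp only [Set.mem_diff, Set.mem_insert_iff, Set.mem_singleton_iff]
          tauto
        rw [he]
        have hlt := Set.ncard_diff_singleton_lt_of_mem hw (hτfin.diff)
        omega
      obtain ⟨γ', ⟨hγ'f, hγ''γ'⟩, hfγ'⟩ := ih γ'' hγ''f hsub'' hcard''
      exact ⟨γ', ⟨hγ'f, hγγ''.trans hγ''γ'⟩, hfγ'⟩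

/-- characterizations of local surjectivity by right lifting
properties. -/
theorem statement_4 {V : Type u} {W : Type v} {Γ : SComplex V} {K : SComplex W}
    (f : Map Γ K) :
    (f.LocSurj ↔ ∀ (m n : ℕ) (g : Map (deltaC m) (deltaC n)),
        Function.Injective g.toFun → RLP g f) ∧
    (f.LocSurj ↔ ∀ n : ℕ, RLP (deltaMap (Fin.castSucc : Fin (n + 1) → Fin (n + 2))) f) := by
  constructor
  · constructor
    · intro hf m n g hg
      exact aux_locsurj_rlp f hf g hg
    · intro h
      exact aux_rlp_locsurj f (fun n => h n (n+1) _ (Fin.castSucc_injective _))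
  · constructor
    · intro hf n
      exact aux_locsurj_rlp f hf _ (Fin.castSucc_injective _)
    · exact aux_rlp_locsurj f

end Ctx
end

section
/- For a simplicial complex map f: Γ → Σ, the following are equivalent: (1) f is discrete over vertices; (2) f has the right lifting property with respect to every surjective simplicial complex map Δ^n ↠ Δ^m (m ≥ 0); (3) f has the right lifting property with respect to the map s^0: Δ^1 ↠ Δ^0 (induced by the constant map {0,1} → {0}). -/
universe u v w t

namespace Ctx
open SComplex

/-- characterizations of discreteness over vertices by right
lifting properties. -/
theorem statement_5 {V : Type u} {W : Type v} {Γ : SComplex V} {K : SComplex W}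
    (f : Map Γ K) :
    (f.DiscV ↔ ∀ (m n : ℕ) (g : Map (deltaC n) (deltaC m)),
        Function.Surjective g.toFun → RLP g f) ∧
    (f.DiscV ↔ RLP (deltaMap (fun _ : Fin 2 => (0 : Fin 1))) f) := by
  have h1 : f.DiscV → ∀ (m n : ℕ) (g : Map (deltaC n) (deltaC m)),
      Function.Surjective g.toFun → RLP g f := by
    intro hd m n g hg u v hcomm
    have hfv : ∀ x, f.toFun (u.toFun x) = v.toFun (g.toFun x) :=
      fun x => congrFun (congrArg Map.toFun hcomm) x
    set s := Function.surjInv hg with hs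
    have hgs : ∀ y, g.toFun (s y) = y := Function.surjInv_eq hg
    refine ⟨⟨u.toFun ∘ s, ?_⟩, ?_, ?_⟩
    · intro σ hσ
      rw [Set.image_comp]
      exact u.map_faces (hσ.image s)
    · ext x
      show u.toFun (s (g.toFun x)) = u.toFun x
      by_contra hne
      refine hd _ _ hne ?_ ?_
      · rw [hfv, hfv, hgs]
      · have hface : ({s (g.toFun x), x} : Set (Fin (n + 1))) ∈ (deltaC n).faces :=
          ⟨_, Set.mem_insert _ _⟩
        have := u.map_faces hface
        rwa [Set.image_pair] at this
    · ext y
      show f.toFun (u.toFun (s y)) = v.toFun y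
      rw [hfv, hgs]
  have h2 : RLP (deltaMap (fun _ : Fin 2 => (0 : Fin 1))) f → f.DiscV := by
    intro hr x y hxy hfeq hface
    have hu : ∀ σ : Set (Fin 2), σ.Nonempty →
        (fun i : Fin 2 => if i = 0 then x else y) '' σ ∈ Γ.faces := by
      intro σ hσ
      refine Γ.down_closed hface ?_ (hσ.image _)
      rintro _ ⟨i, _, rfl⟩
      by_cases hi : i = 0 <;> simp [hi]
    set u : Map (deltaC 1) Γ := ⟨fun i => if i = 0 then x else y, fun σ hσ => hu σ hσ⟩
    set v : Map (deltaC 0) K := ⟨fun _ => f.toFun x, fun σ hσ => by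
      rw [Set.Nonempty.image_const hσ]; exact K.singleton_mem _⟩
    have hcomm : f.comp u = v.comp (deltaMap (fun _ : Fin 2 => (0 : Fin 1))) := by
      ext i
      show f.toFun (if i = 0 then x else y) = f.toFun x
      by_cases hi : i = 0 <;> simp [hi, hfeq.symm]
    obtain ⟨h, hhg, _⟩ := hr u v hcomm
    have hx : h.toFun 0 = x := by
      have := congrFun (congrArg Map.toFun hhg) 0
      simpa [Map.comp, deltaMap, u] using this
    have hy : h.toFun 0 = y := by
      have := congrFun (congrArg Map.toFun hhg) 1
      simpa [Map.comp, deltaMap, u] using this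
    exact hxy (hx ▸ hy)
  have hsurj : Function.Surjective (deltaMap (fun _ : Fin 2 => (0 : Fin 1))).toFun :=
    fun y => ⟨0, Fin.fin_one_eq_zero y ▸ rfl⟩
  exact ⟨⟨fun hd => h1 hd, fun h => h2 (h 0 1 _ hsurj)⟩,
    ⟨fun hd => h1 hd 0 1 _ hsurj, h2⟩⟩

end Ctx
end

section
/- A simplicial complex map f: Γ → Σ is a bundle scenario if and only if f has the right lifting property with respect to Δθ: Δ^m → Δ^n for every order-preserving map θ: {0,…,m} → {0,…,n} and with respect to the inclusion of the empty simplicial complex into Δ^n for every n ≥ 0 (i.e., with respect to the image under Δ of every morphism of the augmented simplex category Δ₊). -/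
universe u v w t

namespace Ctx
open SComplex

private lemma exists_enum {W : Type*} {σ : Set W} (hfin : σ.Finite) (hne : σ.Nonempty) :
    ∃ (m : ℕ) (g : Fin (m + 1) → W), Set.range g = σ := by
  haveI := hfin.fintype
  obtain ⟨x, hx⟩ := hne
  have hcard : Fintype.card σ ≠ 0 := (Fintype.card_pos_iff.mpr ⟨⟨x, hx⟩⟩).ne'
  obtain ⟨m, hm⟩ := Nat.exists_eq_succ_of_ne_zero hcard
  let e : σ ≃ Fin (m + 1) := (Fintype.equivFin σ).trans (finCongr hm)
  refine ⟨m, fun i => (e.symm i).1, ?_⟩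
  ext y
  constructor
  · rintro ⟨i, rfl⟩; exact (e.symm i).2
  · intro hy; exact ⟨e ⟨y, hy⟩, by simp⟩

/-- A map `Δ^n → Γ` from a vertex function with range inside a face. -/
private def mkMap {V : Type*} {Γ : SComplex V} {n : ℕ} (g : Fin (n + 1) → V) {γ : Set V}
    (hγ : γ ∈ Γ.faces) (hg : ∀ i, g i ∈ γ) : Map (deltaC n) Γ :=
  ⟨g, fun σ hσ => Γ.down_closed hγ (by rintro _ ⟨i, _, rfl⟩; exact hg i) (hσ.image g)⟩

private lemma injOn_of_discV {V : Type*} {W : Type*} {Γ : SComplex V} {K : SComplex W}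
    {f : Map Γ K} (hD : f.DiscV) {γ : Set V} (hγ : γ ∈ Γ.faces) :
    Set.InjOn f.toFun γ := by
  intro x hx y hy hxy
  by_contra hne
  refine hD x y hne hxy (Γ.down_closed hγ ?_ ⟨x, by simp⟩)
  intro z hz
  rcases hz with rfl | hz
  · exact hx
  · rcases hz with rfl; exact hy

/-- bundle scenarios are exactly the maps with the right lifting
property against the image under `Δ` of every morphism of the augmented
simplex category. -/
theorem statement_6 {V : Type u} {W : Type v} {Γ : SComplex V} {K : SComplex W}
    (f : Map Γ K) :
    f.IsBundle ↔
      ((∀ (m n : ℕ) (θ : Fin (m + 1) → Fin (n + 1)), Monotone θ → RLP (deltaMap θ) f) ∧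
       (∀ n : ℕ, RLP (emptyToDelta n) f)) := by
  constructor
  · rintro ⟨hS, hL, hD⟩
    constructor
    · -- RLP against Δθ
      intro m n θ _hmono u v hcomp
      have hc : ∀ i, f.toFun (u.toFun i) = v.toFun (θ i) := fun i =>
        congrFun (congrArg Map.toFun hcomp) i
      have huniv : (Set.univ : Set (Fin (m + 1))) ∈ (deltaC m).faces := ⟨0, trivial⟩
      have hunivn : (Set.univ : Set (Fin (n + 1))) ∈ (deltaC n).faces := ⟨0, trivial⟩
      set γ : Set V := u.toFun '' Set.univ with hγdef
      have hγ : γ ∈ Γ.faces := u.map_faces huniv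
      set τ : Set W := v.toFun '' Set.univ with hτdef
      have hτ : τ ∈ K.faces := v.map_faces hunivn
      have hstar : τ ∈ K.star (f.toFun '' γ) := by
        refine ⟨hτ, ?_⟩
        rintro _ ⟨_, ⟨i, _, rfl⟩, rfl⟩
        exact ⟨θ i, trivial, (hc i).symm⟩
      obtain ⟨γ', ⟨hγ'f, hγsub⟩, hγ'img⟩ := hL γ hγ τ hstar
      have hinj : Set.InjOn f.toFun γ' := injOn_of_discV hD hγ'f
      have hch : ∀ i : Fin (n + 1), ∃ y ∈ γ', f.toFun y = v.toFun i := by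
        intro i
        have : v.toFun i ∈ f.toFun '' γ' := by
          rw [hγ'img]; exact ⟨i, trivial, rfl⟩
        obtain ⟨y, hy, hfy⟩ := this
        exact ⟨y, hy, hfy⟩
      choose hv hvmem hvf using hch
      refine ⟨mkMap hv hγ'f hvmem, ?_, ?_⟩
      · apply Map.ext; funext j
        show hv (θ j) = u.toFun j
        refine hinj (hvmem _) (hγsub ⟨j, trivial, rfl⟩) ?_
        rw [hvf, hc]
      · apply Map.ext; funext i
        exact hvf i
    · -- RLP against ∅ → Δⁿ
      intro n u v _hcomp
      have hunivn : (Set.univ : Set (Fin (n + 1))) ∈ (deltaC n).faces := ⟨0, trivial⟩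
      obtain ⟨γ, hγ, hγimg⟩ := hS (v.toFun '' Set.univ) (v.map_faces hunivn)
      have hch : ∀ i : Fin (n + 1), ∃ y ∈ γ, f.toFun y = v.toFun i := by
        intro i
        have : v.toFun i ∈ f.toFun '' γ := by
          rw [hγimg]; exact ⟨i, trivial, rfl⟩
        obtain ⟨y, hy, hfy⟩ := this
        exact ⟨y, hy, hfy⟩
      choose hv hvmem hvf using hch
      refine ⟨mkMap hv hγ hvmem, ?_, ?_⟩
      · apply Map.ext; funext x; exact x.elim
      · apply Map.ext; funext i; exact hvf i
  · rintro ⟨hθ, hE⟩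
    have hS : f.Surj := by
      intro σ hσ
      obtain ⟨m, t, ht⟩ := exists_enum (K.finite_mem σ hσ) (K.nonempty_mem σ hσ)
      have hv : ∀ i, t i ∈ σ := fun i => ht ▸ ⟨i, rfl⟩
      obtain ⟨h, _, hfh⟩ := hE m ⟨fun x => x.elim, fun _ h => h.elim⟩ (mkMap t hσ hv)
        (by apply Map.ext; funext x; exact x.elim)
      have huniv : (Set.univ : Set (Fin (m + 1))) ∈ (deltaC m).faces := ⟨0, trivial⟩
      refine ⟨h.toFun '' Set.univ, h.map_faces huniv, ?_⟩
      have hc : ∀ i, f.toFun (h.toFun i) = t i := fun i =>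
        congrFun (congrArg Map.toFun hfh) i
      rw [← ht]
      ext y
      constructor
      · rintro ⟨_, ⟨i, _, rfl⟩, rfl⟩; exact ⟨i, (hc i).symm⟩
      · rintro ⟨i, rfl⟩; exact ⟨h.toFun i, ⟨i, trivial, rfl⟩, hc i⟩
    have hD : f.DiscV := by
      intro x y hne hfxy hface
      set θ : Fin 2 → Fin 1 := fun _ => 0 with hθdef
      have hg : ∀ i : Fin 2, (if i = 0 then x else y) ∈ ({x, y} : Set V) := by
        intro i
        by_cases hi : i = 0 <;> simp [hi]
      set u : Map (deltaC 1) Γ := mkMap (fun i => if i = 0 then x else y) hface hg with hu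
      have hsing : ({f.toFun x} : Set W) ∈ K.faces := K.singleton_mem _
      have hv : ∀ _i : Fin 1, f.toFun x ∈ ({f.toFun x} : Set W) := fun _ => rfl
      set v : Map (deltaC 0) K := mkMap (fun _ => f.toFun x) hsing hv with hvdef
      have hcomm : f.comp u = v.comp (deltaMap θ) := by
        apply Map.ext; funext i
        show f.toFun (if i = 0 then x else y) = f.toFun x
        by_cases hi : i = 0 <;> simp [hi, hfxy]
      obtain ⟨h, hhu, _⟩ := hθ 1 0 θ (fun _ _ _ => le_refl _) u v hcomm
      have hc : ∀ i : Fin 2, h.toFun (θ i) = u.toFun i := fun i =>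
        congrFun (congrArg Map.toFun hhu) i
      have h0 := hc 0
      have h1 := hc 1
      simp only [hθdef, hu, mkMap] at h0 h1
      exact hne ((by simpa using h0 : h.toFun 0 = x).symm.trans (by simpa using h1))
    have hL : f.LocSurj := by
      intro γ hγ τ hτstar
      obtain ⟨hτ, hsub⟩ := hτstar
      obtain ⟨m, g, hg⟩ := exists_enum (Γ.finite_mem γ hγ) (Γ.nonempty_mem γ hγ)
      obtain ⟨n, t, ht⟩ := exists_enum (K.finite_mem τ hτ) (K.nonempty_mem τ hτ)
      have hφ : ∀ i : Fin (m + 1), ∃ j, t j = f.toFun (g i) := by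
        intro i
        have : f.toFun (g i) ∈ τ := hsub ⟨g i, hg ▸ ⟨i, rfl⟩, rfl⟩
        rw [← ht] at this
        obtain ⟨j, hj⟩ := this
        exact ⟨j, hj⟩
      choose φ hφt using hφ
      set π := Tuple.sort φ with hπ
      have hmono : Monotone (φ ∘ π) := Tuple.monotone_sort φ
      have hgπ : ∀ i, g (π i) ∈ γ := fun i => hg ▸ ⟨π i, rfl⟩
      have htτ : ∀ i, t i ∈ τ := fun i => ht ▸ ⟨i, rfl⟩
      set u : Map (deltaC m) Γ := mkMap (fun i => g (π i)) hγ hgπ with hu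
      set v : Map (deltaC n) K := mkMap t hτ htτ with hv
      have hcomm : f.comp u = v.comp (deltaMap (φ ∘ π)) := by
        apply Map.ext; funext i
        exact (hφt (π i)).symm
      obtain ⟨h, hhu, hfh⟩ := hθ m n (φ ∘ π) hmono u v hcomm
      have huniv : (Set.univ : Set (Fin (n + 1))) ∈ (deltaC n).faces := ⟨0, trivial⟩
      have hc1 : ∀ i : Fin (m + 1), h.toFun (φ (π i)) = g (π i) := fun i =>
        congrFun (congrArg Map.toFun hhu) i
      have hc2 : ∀ j : Fin (n + 1), f.toFun (h.toFun j) = t j := fun j =>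
        congrFun (congrArg Map.toFun hfh) j
      refine ⟨h.toFun '' Set.univ, ⟨h.map_faces huniv, ?_⟩, ?_⟩
      · intro y hy
        rw [← hg] at hy
        obtain ⟨i, rfl⟩ := hy
        obtain ⟨i', rfl⟩ := π.surjective i
        exact ⟨φ (π i'), trivial, hc1 i'⟩
      · rw [← ht]
        ext y
        constructor
        · rintro ⟨_, ⟨j, _, rfl⟩, rfl⟩; exact ⟨j, (hc2 j).symm⟩
        · rintro ⟨j, rfl⟩; exact ⟨h.toFun j, ⟨j, trivial, rfl⟩, hc2 j⟩
    exact ⟨hS, hL, hD⟩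

end Ctx
end

section
/- Let f: Γ → Σ be a simplicial complex map that is discrete over vertices. Then the commutative square formed by δ_Γ: Γ → ĤNΓ, δ_Σ: Σ → ĤNΣ, f, and ĤNf is a pullback: for every simplicial complex Θ and simplicial complex maps u: Θ → ĤNΓ and v: Θ → Σ with ĤNf ∘ u = δ_Σ ∘ v, there exists a unique simplicial complex map w: Θ → Γ with δ_Γ ∘ w = u and f ∘ w = v. -/
universe u v w t

namespace Ctx
open SComplex

/-- for `f` discrete over vertices, the naturality square of
`δ : id → ĤN` at `f` is a pull-back. -/
theorem statement_7 {V : Type u} {W : Type v} {T : Type t}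
    {Γ : SComplex V} {K : SComplex W} (f : Map Γ K) (hf : f.DiscV)
    (Θc : SComplex T) (u : Map Θc (nerveC Γ)) (vm : Map Θc K)
    (hcomm : (nerveMap f).comp u = (deltaHat K).comp vm) :
    ∃! w : Map Θc Γ, (deltaHat Γ).comp w = u ∧ f.comp w = vm := by
  have himg : ∀ t : T, f.toFun '' (u.toFun t).1 = {vm.toFun t} := fun t =>
    congrArg (fun m => (Map.toFun m t).1) hcomm
  have hsing : ∀ t : T, ∃ x : V, (u.toFun t).1 = {x} := by
    intro t
    obtain ⟨x, hx⟩ := Γ.nonempty_mem _ (u.toFun t).2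
    refine ⟨x, ?_⟩
    ext y
    simp only [Set.mem_singleton_iff]
    constructor
    · intro hy
      by_contra hne
      have hfx : f.toFun x = vm.toFun t := by
        have := Set.mem_image_of_mem f.toFun hx; rw [himg t] at this; exact this
      have hfy : f.toFun y = vm.toFun t := by
        have := Set.mem_image_of_mem f.toFun hy; rw [himg t] at this; exact this
      exact hf y x hne (hfy.trans hfx.symm)
        (Γ.down_closed (u.toFun t).2 (by rintro z (rfl | rfl); exacts [hy, hx])
          ⟨y, Or.inl rfl⟩)
    · rintro rfl; exact hx
  choose wf hwf using hsing
  have hmem : ∀ t : T, wf t ∈ (u.toFun t).1 := fun t => by rw [hwf t]; rfl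
  have hw : ∀ ⦃σ⦄, σ ∈ Θc.faces → wf '' σ ∈ Γ.faces := by
    intro σ hσ
    have h1 := u.map_faces hσ
    have h2 := h1.2.2
    have h3 : (⋃ τ ∈ u.toFun '' σ, (τ : Set V)) = wf '' σ := by
      rw [Set.biUnion_image]
      ext x
      simp only [Set.mem_iUnion, Set.mem_image]
      constructor
      · rintro ⟨t, ht, hx⟩
        refine ⟨t, ht, ?_⟩
        rw [hwf t] at hx; exact hx.symm
      · rintro ⟨t, ht, rfl⟩
        exact ⟨t, ht, hmem t⟩
    rw [h3] at h2
    exact h2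
  have hfw : ∀ t : T, f.toFun (wf t) = vm.toFun t := by
    intro t
    have := Set.mem_image_of_mem f.toFun (hmem t)
    rw [himg t] at this
    exact this
  refine ⟨⟨wf, hw⟩, ⟨?_, ?_⟩, ?_⟩
  · apply Map.ext
    funext t
    exact Subtype.ext (hwf t).symm
  · apply Map.ext
    funext t
    exact hfw t
  · rintro w' ⟨h1, _⟩
    apply Map.ext
    funext t
    have := congrArg (fun m => (Map.toFun m t).1) h1
    have h2 : ({w'.toFun t} : Set V) = (u.toFun t).1 := this
    rw [hwf t] at h2
    exact (Set.singleton_eq_singleton_iff.mp h2)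

end Ctx
end

section
/- Let f: Γ → Σ be a bundle scenario and p an empirical model on f. Then the family ĤNp defined by (ĤNp)_τ(κ) := p_{μ_Σ(τ)}(μ_Γ(κ)) for τ ∈ ĤNΣ and κ ∈ (ĤNf)⁻¹(τ) is a well-defined empirical model on the bundle scenario ĤNf: ĤNΓ → ĤNΣ; that is, each (ĤNp)_τ is a distribution in D_R((ĤNf)⁻¹(τ)) and (ĤNp)_τ|_{τ'} = (ĤNp)_{τ'} whenever τ' ⊆ τ in ĤNΣ. -/
universe u v w t

namespace Ctx
open SComplex

section Aux

variable {V : Type u} {W : Type v} {Γ : SComplex V} {K : SComplex W}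

/-- The subsimplex of `g` lying over `σ`. -/
def aset (f : Map Γ K) (g : Set V) (σ : Set W) : Set V := {y | y ∈ g ∧ f.toFun y ∈ σ}

lemma res_fst (f : Map Γ K) {σb σ : Set W} (hσ : σ ∈ K.faces) (h : σ ⊆ σb)
    (γ : f.fiber σb) : (f.resFiber hσ h γ).1 = aset f γ.1 σ := rfl

lemma aset_face (f : Map Γ K) {σb : Set W} (γ : f.fiber σb) {σ : Set W}
    (hσ : σ ∈ K.faces) (h : σ ⊆ σb) : aset f γ.1 σ ∈ Γ.faces :=
  (f.resFiber hσ h γ).2.1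

lemma image_aset (f : Map Γ K) {σb : Set W} (γ : f.fiber σb) {σ : Set W}
    (hσ : σ ∈ K.faces) (h : σ ⊆ σb) : f.toFun '' aset f γ.1 σ = σ :=
  (f.resFiber hσ h γ).2.2

lemma aset_aset (f : Map Γ K) (g : Set V) {σ T : Set W} (hs : σ ⊆ T) :
    aset f (aset f g T) σ = aset f g σ := by
  ext y
  constructor
  · rintro ⟨⟨h1, _⟩, h3⟩
    exact ⟨h1, h3⟩
  · rintro ⟨h1, h2⟩
    exact ⟨⟨h1, hs h2⟩, h2⟩

lemma bundle_injOn (f : Map Γ K) (hd : f.DiscV) {γ : Set V} (hγ : γ ∈ Γ.faces) :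
    Set.InjOn f.toFun γ := by
  intro x hx y hy hxy
  by_contra hne
  refine hd x y hne hxy (Γ.down_closed hγ ?_ ⟨x, Or.inl rfl⟩)
  intro z hz
  simp only [Set.mem_insert_iff, Set.mem_singleton_iff] at hz
  rcases hz with rfl | rfl
  · exact hx
  · exact hy

lemma aset_of_subface (f : Map Γ K) (hd : f.DiscV) {g : Set V} (hg : g ∈ Γ.faces)
    {d : Set V} (hdg : d ⊆ g) : aset f g (f.toFun '' d) = d := by
  ext y
  constructor
  · rintro ⟨hyg, z, hz, hfz⟩
    have := bundle_injOn f hd hg hyg (hdg hz) hfz.symm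
    exact this ▸ hz
  · intro hy
    exact ⟨hdg hy, y, hy, rfl⟩

/-- The canonical element of the nerve fiber over `τ` obtained from a fiber
element over the union of `τ`: the set of its subsimplices over members of `τ`. -/
def liftSet (f : Map Γ K) (τ : Set K.Face) (γ : f.fiber (⋃ σ ∈ τ, (σ : Set W))) :
    Set Γ.Face :=
  {δ | ∃ σ ∈ τ, (δ : Set V) = aset f γ.1 (σ : Set W)}

lemma liftSet_iUnion (f : Map Γ K) (τ : Set K.Face) (γ : f.fiber (⋃ σ ∈ τ, (σ : Set W))) :
    (⋃ δ ∈ liftSet f τ γ, (δ : Set V)) = γ.1 := by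
  ext y
  simp only [Set.mem_iUnion]
  constructor
  · rintro ⟨δ, ⟨σ, hσ, hδ⟩, hy⟩
    rw [hδ] at hy
    exact hy.1
  · intro hy
    have hfy : f.toFun y ∈ ⋃ σ ∈ τ, (σ : Set W) := γ.2.2 ▸ ⟨y, hy, rfl⟩
    simp only [Set.mem_iUnion] at hfy
    obtain ⟨σ, hσ, hmem⟩ := hfy
    exact ⟨⟨aset f γ.1 σ, aset_face f γ σ.2 (Set.subset_biUnion_of_mem hσ)⟩,
      ⟨σ, hσ, rfl⟩, ⟨hy, hmem⟩⟩

lemma liftSet_image (f : Map Γ K) (τ : Set K.Face) (γ : f.fiber (⋃ σ ∈ τ, (σ : Set W))) :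
    (nerveMap f).toFun '' liftSet f τ γ = τ := by
  ext σ'
  constructor
  · rintro ⟨δ, ⟨σ, hσ, hδ⟩, rfl⟩
    have : f.toFun '' (δ : Set V) = (σ : Set W) := by
      rw [hδ]; exact image_aset f γ σ.2 (Set.subset_biUnion_of_mem hσ)
    have hh : (nerveMap f).toFun δ = σ := Subtype.ext this
    rw [hh]; exact hσ
  · intro hσ'
    refine ⟨⟨aset f γ.1 σ', aset_face f γ σ'.2 (Set.subset_biUnion_of_mem hσ')⟩,
      ⟨σ', hσ', rfl⟩, ?_⟩
    exact Subtype.ext (image_aset f γ σ'.2 (Set.subset_biUnion_of_mem hσ'))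

/-- The lift of a fiber element over the union of `τ` to the nerve fiber over `τ`. -/
def nerveLift (f : Map Γ K) {τ : Set K.Face} (hτ : τ ∈ (nerveC K).faces)
    (γ : f.fiber (⋃ σ ∈ τ, (σ : Set W))) : (nerveMap f).fiber τ := by
  refine ⟨liftSet f τ γ, ⟨⟨?_, ?_, ?_⟩, liftSet_image f τ γ⟩⟩
  · -- finiteness
    refine Set.Finite.of_finite_image ?_ Subtype.val_injective.injOn
    refine Set.Finite.subset (hτ.1.image (fun σ : K.Face => aset f γ.1 (σ : Set W))) ?_
    rintro s ⟨δ, ⟨σ, hσ, hδ⟩, rfl⟩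
    exact ⟨σ, hσ, hδ.symm⟩
  · -- nonempty
    obtain ⟨σ, hσ⟩ := hτ.2.1
    exact ⟨⟨aset f γ.1 σ, aset_face f γ σ.2 (Set.subset_biUnion_of_mem hσ)⟩, σ, hσ, rfl⟩
  · -- union is a face
    rw [show (⋃ δ ∈ liftSet f τ γ, (δ : Set V)) = γ.1 from liftSet_iUnion f τ γ]
    exact γ.2.1

lemma nerveLift_eq_of_union (f : Map Γ K) (hd : f.DiscV) {τ : Set K.Face}
    (hτ : τ ∈ (nerveC K).faces) (κ : (nerveMap f).fiber τ)
    (γ : f.fiber (⋃ σ ∈ τ, (σ : Set W)))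
    (h : γ.1 = ⋃ δ ∈ (κ : Set Γ.Face), (δ : Set V)) :
    nerveLift f hτ γ = κ := by
  apply Subtype.ext
  show liftSet f τ γ = κ.1
  ext δ
  constructor
  · rintro ⟨σ, hσ, hδ⟩
    have hσ' : σ ∈ (nerveMap f).toFun '' κ.1 := κ.2.2.symm ▸ hσ
    obtain ⟨δ', hδ', himg⟩ := hσ'
    have himg' : f.toFun '' (δ' : Set V) = (σ : Set W) := congrArg Subtype.val himg
    have hsub : (δ' : Set V) ⊆ γ.1 := by
      rw [h]; exact Set.subset_biUnion_of_mem hδ'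
    have : (δ : Set V) = (δ' : Set V) := by
      rw [hδ, ← himg', aset_of_subface f hd γ.2.1 hsub]
    exact (Subtype.ext this) ▸ hδ'
  · intro hδ
    have hσ : (nerveMap f).toFun δ ∈ τ := κ.2.2 ▸ Set.mem_image_of_mem _ hδ
    have hsub : (δ : Set V) ⊆ γ.1 := by
      rw [h]; exact Set.subset_biUnion_of_mem hδ
    exact ⟨(nerveMap f).toFun δ, hσ,
      (aset_of_subface f hd γ.2.1 hsub).symm⟩

lemma nerveLift_injective (f : Map Γ K) {τ : Set K.Face} (hτ : τ ∈ (nerveC K).faces) :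
    Function.Injective (nerveLift f hτ) := by
  intro γ₁ γ₂ hγ
  apply Subtype.ext
  have h : liftSet f τ γ₁ = liftSet f τ γ₂ := congrArg Subtype.val hγ
  rw [← liftSet_iUnion f τ γ₁, ← liftSet_iUnion f τ γ₂, h]

lemma Dist.map_comp {R : Type t} [CommSemiring R] {U : Type u} {U' : Type v} {U'' : Type w}
    (g : U' → U'') (h : U → U') (p : Dist R U) :
    Dist.map g (Dist.map h p) = Dist.map (g ∘ h) p :=
  Subtype.ext Finsupp.mapDomain_comp.symm

lemma nerveLift_res (f : Map Γ K) (hd : f.DiscV) {τ τ' : Set K.Face}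
    (hτ : τ ∈ (nerveC K).faces) (hτ' : τ' ∈ (nerveC K).faces) (hsub : τ' ⊆ τ)
    (γ : f.fiber (⋃ σ ∈ τ, (σ : Set W))) :
    (nerveMap f).resFiber hτ' hsub (nerveLift f hτ γ) =
      nerveLift f hτ' (f.resFiber hτ'.2.2 (Set.biUnion_subset_biUnion_left hsub) γ) := by
  apply Subtype.ext
  set γ' := f.resFiber hτ'.2.2 (Set.biUnion_subset_biUnion_left hsub) γ with hγ'
  have hγ'fst : (γ' : Set V) = aset f γ.1 (⋃ σ ∈ τ', (σ : Set W)) := rfl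
  show aset (nerveMap f) (liftSet f τ γ) τ' = liftSet f τ' γ'
  ext δ
  constructor
  · rintro ⟨⟨σ, hσ, hδ⟩, hmem⟩
    have himg : f.toFun '' (δ : Set V) = (σ : Set W) := by
      rw [hδ]; exact image_aset f γ σ.2 (Set.subset_biUnion_of_mem hσ)
    have hne : (nerveMap f).toFun δ = σ := Subtype.ext himg
    rw [hne] at hmem
    refine ⟨σ, hmem, ?_⟩
    rw [hδ, hγ'fst, aset_aset f γ.1 (Set.subset_biUnion_of_mem hmem)]
  · rintro ⟨σ, hσ', hδ⟩
    have hδ2 : (δ : Set V) = aset f γ.1 (σ : Set W) := by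
      rw [hδ, hγ'fst, aset_aset f γ.1 (Set.subset_biUnion_of_mem hσ')]
    have himg : f.toFun '' (δ : Set V) = (σ : Set W) := by
      rw [hδ2]
      exact image_aset f γ σ.2 (Set.subset_biUnion_of_mem (hsub hσ'))
    refine ⟨⟨σ, hsub hσ', hδ2⟩, ?_⟩
    rw [show (nerveMap f).toFun δ = σ from Subtype.ext himg]
    exact hσ'

end Aux

/-- `ĤN p` is a well-defined empirical model on `ĤN f`. -/
theorem statement_8 {V : Type u} {W : Type v} {Γ : SComplex V} {K : SComplex W}
    (f : Map Γ K) (hf : f.IsBundle)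
    (R : Type t) [CommSemiring R] (hR : ∀ a b : R, a + b = 0 → a = 0 ∧ b = 0)
    (p : EmpiricalModel R f) :
    ∃ q : EmpiricalModel R (nerveMap f),
      ∀ τ (hτ : τ ∈ (nerveC K).faces) (κ : (nerveMap f).fiber τ)
        (hu : (⋃ σ ∈ τ, (σ : Set W)) ∈ K.faces)
        (γ : f.fiber (⋃ σ ∈ τ, (σ : Set W))),
        (γ : Set V) = (⋃ δ ∈ (κ : Set Γ.Face), (δ : Set V)) →
        (q.dist τ hτ).1 κ = (p.dist _ hu).1 γ := by
  refine ⟨⟨fun τ hτ => Dist.map (nerveLift f hτ) (p.dist _ hτ.2.2), ?_⟩, ?_⟩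
  · intro τ hτ τ' hτ' hsub
    rw [Dist.map_comp, ← p.compat _ hτ.2.2 _ hτ'.2.2 (Set.biUnion_subset_biUnion_left hsub),
      Dist.map_comp]
    congr 1
    funext γ
    exact nerveLift_res f hf.2.2 hτ hτ' hsub γ
  · intro τ hτ κ hu γ hγ
    have hκ : κ = nerveLift f hτ γ := (nerveLift_eq_of_union f hf.2.2 hτ κ γ hγ).symm
    rw [hκ]
    show Finsupp.mapDomain (nerveLift f hτ) (p.dist _ hτ.2.2).1 (nerveLift f hτ γ) = _
    rw [Finsupp.mapDomain_apply (nerveLift_injective f hτ)]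

end Ctx
end
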